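/- Fix μ ∈ ℂ and γ₁, γ₂, γ₃ ∈ ℂ. Define σ₁(t) = γ₁·exp(−μt), σ₂(t) = (γ₂ + (μt/3)·γ₁⁴)·exp(−4μt), and σ₃(t) = (γ₃ − μt·γ₁·γ₂² + ((19μt/24) − (μ²t²/3))·γ₁⁵·γ₂ + ((11μt/81) + (19μ²t²/144) − (μ³t³/27))·γ₁⁹)·exp(−9μt). Then (σ₁, σ₂, σ₃) solves the system σ₁' = −μσ₁, σ₂' = μ(−4σ₂ + (1/3)σ₁⁴), σ₃' = μ(−9σ₃ − σ₁σ₂² + (19/24)σ₁⁵σ₂ + (11/81)σ₁⁹), with initial data (γ₁, γ₂, γ₃) at t = 0. -/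

import Mathlib

open Complex

lemma key_deriv (a b c d m : ℂ) (t : ℝ) :
    HasDerivAt (fun s : ℝ => (a + b * s + c * s ^ 2 + d * s ^ 3) * Complex.exp (m * s))
      ((b + c * (2 * (t : ℂ)) + d * (3 * (t : ℂ) ^ 2)) * Complex.exp (m * t)
        + (a + b * t + c * (t : ℂ) ^ 2 + d * (t : ℂ) ^ 3) * (Complex.exp (m * t) * m)) t := by
  have hb : HasDerivAt (fun z : ℂ => b * z) b t := by
    simpa using (hasDerivAt_id (t : ℂ)).const_mul b
  have hc : HasDerivAt (fun z : ℂ => c * z ^ 2) (c * (2 * (t : ℂ))) t := by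
    simpa using (hasDerivAt_pow 2 (t : ℂ)).const_mul c
  have hd : HasDerivAt (fun z : ℂ => d * z ^ 3) (d * (3 * (t : ℂ) ^ 2)) t := by
    simpa using (hasDerivAt_pow 3 (t : ℂ)).const_mul d
  have he : HasDerivAt (fun z : ℂ => Complex.exp (m * z)) (Complex.exp (m * t) * m) t := by
    simpa using ((hasDerivAt_id (t : ℂ)).const_mul m).cexp
  have hp := (((hb.const_add a).add hc).add hd).mul he
  have := hp.comp_ofReal
  convert this using 2
  all_goals rfl

/-- The explicit formulas solve the triangular conjugated system
`σ₁' = −μσ₁`, `σ₂' = μ(−4σ₂ + σ₁⁴/3)`,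
`σ₃' = μ(−9σ₃ − σ₁σ₂² + (19/24)σ₁⁵σ₂ + (11/81)σ₁⁹)` with data `(γ₁,γ₂,γ₃)` at `t = 0`. -/
theorem stmt_7 (μ γ₁ γ₂ γ₃ : ℂ) (σ₁ σ₂ σ₃ : ℝ → ℂ)
    (h₁ : ∀ t : ℝ, σ₁ t = γ₁ * Complex.exp (-μ * t))
    (h₂ : ∀ t : ℝ, σ₂ t = (γ₂ + (μ * t / 3) * γ₁ ^ 4) * Complex.exp (-4 * μ * t))
    (h₃ : ∀ t : ℝ, σ₃ t =
      (γ₃ - μ * t * γ₁ * γ₂ ^ 2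
        + ((19 * μ * t / 24) - (μ ^ 2 * t ^ 2 / 3)) * γ₁ ^ 5 * γ₂
        + ((11 * μ * t / 81) + (19 * μ ^ 2 * t ^ 2 / 144) - (μ ^ 3 * t ^ 3 / 27)) * γ₁ ^ 9)
        * Complex.exp (-9 * μ * t)) :
    σ₁ 0 = γ₁ ∧ σ₂ 0 = γ₂ ∧ σ₃ 0 = γ₃ ∧
      (∀ t : ℝ, HasDerivAt σ₁ (-μ * σ₁ t) t) ∧
      (∀ t : ℝ, HasDerivAt σ₂ (μ * (-4 * σ₂ t + (1 / 3) * (σ₁ t) ^ 4)) t) ∧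
      (∀ t : ℝ, HasDerivAt σ₃
        (μ * (-9 * σ₃ t - σ₁ t * (σ₂ t) ^ 2 + (19 / 24) * (σ₁ t) ^ 5 * σ₂ t
          + (11 / 81) * (σ₁ t) ^ 9)) t) := by
  have e4 : ∀ t : ℝ, Complex.exp (-4 * μ * t) = Complex.exp (-μ * t) ^ 4 := by
    intro t
    rw [← Complex.exp_nat_mul]; congr 1; push_cast; ring
  have e9 : ∀ t : ℝ, Complex.exp (-9 * μ * t) = Complex.exp (-μ * t) ^ 9 := by
    intro t
    rw [← Complex.exp_nat_mul]; congr 1; push_cast; ring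
  have hf1 : σ₁ = fun s : ℝ => (γ₁ + 0 * s + 0 * (s:ℂ) ^ 2 + 0 * (s:ℂ) ^ 3) * Complex.exp (-μ * s) := by
    funext s; rw [h₁ s]; ring
  have hf2 : σ₂ = fun s : ℝ =>
      (γ₂ + (μ / 3 * γ₁ ^ 4) * s + 0 * (s:ℂ) ^ 2 + 0 * (s:ℂ) ^ 3) * Complex.exp (-4 * μ * s) := by
    funext s; rw [h₂ s]; ring
  have hf3 : σ₃ = fun s : ℝ =>
      (γ₃ + (-(μ * γ₁ * γ₂ ^ 2) + 19 * μ / 24 * γ₁ ^ 5 * γ₂ + 11 * μ / 81 * γ₁ ^ 9) * s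
        + (-(μ ^ 2 / 3) * γ₁ ^ 5 * γ₂ + 19 * μ ^ 2 / 144 * γ₁ ^ 9) * (s:ℂ) ^ 2
        + (-(μ ^ 3 / 27) * γ₁ ^ 9) * (s:ℂ) ^ 3) * Complex.exp (-9 * μ * s) := by
    funext s; rw [h₃ s]; ring
  refine ⟨by rw [h₁]; simp, by rw [h₂]; simp, by rw [h₃]; simp, ?_, ?_, ?_⟩
  · intro t
    rw [h₁ t, hf1]
    convert key_deriv γ₁ 0 0 0 (-μ) t using 1
    ring
  · intro t
    rw [h₁ t, h₂ t, hf2]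
    convert key_deriv γ₂ (μ / 3 * γ₁ ^ 4) 0 0 (-4 * μ) t using 1
    simp only [e4]; ring
  · intro t
    rw [h₁ t, h₂ t, h₃ t, hf3]
    convert key_deriv γ₃
      (-(μ * γ₁ * γ₂ ^ 2) + 19 * μ / 24 * γ₁ ^ 5 * γ₂ + 11 * μ / 81 * γ₁ ^ 9)
      (-(μ ^ 2 / 3) * γ₁ ^ 5 * γ₂ + 19 * μ ^ 2 / 144 * γ₁ ^ 9)
      (-(μ ^ 3 / 27) * γ₁ ^ 9) (-9 * μ) t using 1
    simp only [e4, e9]; ring
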